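/- Let w be a Lyndon binary word of length n with strictly more 1's than 0's, and let p_1 < … < p_m (m ≥ 1) be its unmatched positions, all carrying 1. Let w′ be the word obtained from w by changing the letter at position p_m from 1 to 0. If m ≥ 2, then the matched pairs of w′ are exactly the matched pairs of w together with the single new pair {p_1, p_m}, and the unmatched positions of w′ are p_2, …, p_{m−1}. If m = 1, then the matched pairs of w′ equal the matched pairs of w, and p_1 is the unique unmatched position of w′, now carrying 0. -/

import Mathlib

/-!
Common definitions: binary words of length `n`, rotations, necklaces (the quotient
poset `Bₙ/Cₙ`), the cyclic matching procedure, Lyndon words, the map `φ`,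
crossing pairs, and the words `w_t`.

Throughout, a binary word of length `n` is a function `Fin n → Bool`, where `true`
encodes the letter `1` and `false` the letter `0`.
-/

/-- A binary word of length `n`: `true` encodes the letter `1`, `false` the letter `0`. -/
abbrev Word (n : ℕ) := Fin n → Bool

variable {n : ℕ} [NeZero n]

/-- The rotation `σ_i`, shifting the letters of `w` cyclically by `i` positions (so the
letter at position `j` of `w` appears at position `j + i` of `rot i w`). -/
def rot (i : Fin n) (w : Word n) : Word n := fun j => w (j - i)

lemma rot_rot (i j : Fin n) (w : Word n) : rot i (rot j w) = rot (j + i) w := by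
  funext k
  simp [rot, sub_sub, add_comm]

/-- Two words are equivalent when one is a cyclic rotation of the other. -/
def rotSetoid (n : ℕ) [NeZero n] : Setoid (Word n) where
  r w w' := ∃ i : Fin n, rot i w = w'
  iseqv := by
    refine ⟨fun w => ⟨0, ?_⟩, ?_, ?_⟩
    · funext j; simp [rot]
    · rintro w w' ⟨i, rfl⟩
      refine ⟨-i, ?_⟩
      rw [rot_rot]
      funext j; simp [rot]
    · rintro w w' w'' ⟨i, rfl⟩ ⟨j, rfl⟩
      exact ⟨i + j, (rot_rot j i w).symm⟩

/-- A necklace: an equivalence class of binary words under cyclic rotation. -/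
abbrev Necklace (n : ℕ) [NeZero n] := Quotient (rotSetoid n)

/-- The necklace of a word. -/
def nec (w : Word n) : Necklace n := Quotient.mk (rotSetoid n) w

/-- The number of `1`s in a word. -/
def wt (w : Word n) : ℕ := (Finset.univ.filter fun i => w i = true).card

/-- The number of `0`s in a word. -/
def zeros (w : Word n) : ℕ := (Finset.univ.filter fun i => w i = false).card

/-- The rank of a necklace: the number of `1`s in any representative. -/
noncomputable def rank (u : Necklace n) : ℕ := wt (Quotient.out u)

/-- The set of positions belonging to some pair of `M`. -/
def matchedPos (M : Finset (Fin n × Fin n)) : Finset (Fin n) :=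
  M.image Prod.fst ∪ M.image Prod.snd

/-- `j` is the first position outside `S` encountered strictly after `i` in the cyclic
order `i+1, i+2, …` (indices mod `n`). -/
def FirstAfter (S : Finset (Fin n)) (i j : Fin n) : Prop :=
  j ∉ S ∧ j ≠ i ∧ ∀ k : Fin n, k ∉ S → k ≠ i → (j - i).val ≤ (k - i).val

/-- One step of the cyclic matching procedure on the word `w`: choose an as-yet-unmatched
position `i` carrying the letter `0` such that the first as-yet-unmatched position `j`
after `i` in cyclic order carries the letter `1`, and declare `{i, j}` a matched pair
(recorded as the ordered pair `(i, j)`, the `0`-position first). -/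
inductive MatchStep (w : Word n) :
    Finset (Fin n × Fin n) → Finset (Fin n × Fin n) → Prop
  | step {M : Finset (Fin n × Fin n)} {i j : Fin n}
      (hi : i ∉ matchedPos M) (hw : w i = false)
      (hj : FirstAfter (matchedPos M) i j) (hj1 : w j = true) :
      MatchStep w M (insert (i, j) M)

/-- A maximal execution of the cyclic matching procedure on `w`, starting from the empty
matching: `M` is reachable from `∅` by matching steps and no further step is possible. -/
def IsMaximalMatching (w : Word n) (M : Finset (Fin n × Fin n)) : Prop :=
  Relation.ReflTransGen (MatchStep w) ∅ M ∧ ∀ M', ¬ MatchStep w M M'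

/-- The cyclic matching of `w`: the set of matched pairs produced by (any) maximal
execution of the cyclic matching procedure. -/
noncomputable def matching (w : Word n) : Finset (Fin n × Fin n) :=
  letI := Classical.dec (∃ M, IsMaximalMatching w M)
  if h : ∃ M, IsMaximalMatching w M then h.choose else ∅

/-- The unmatched positions of `w`: positions belonging to no matched pair. -/
noncomputable def unmatchedPos (w : Word n) : Finset (Fin n) :=
  Finset.univ \ matchedPos (matching w)

/-- Lexicographic comparison of words with respect to the letter order `1 ≺ 0`
(recall `true` encodes `1` and `false` encodes `0`). -/
def lexLE (w w' : Word n) : Prop :=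
  w = w' ∨ ∃ i : Fin n, (∀ j : Fin n, j < i → w j = w' j) ∧ w i = true ∧ w' i = false

/-- A word is Lyndon if it is lexicographically smallest among all of its rotations,
with respect to the letter order `1 ≺ 0`. -/
def IsLyndon (w : Word n) : Prop := ∀ i : Fin n, lexLE w (rot i w)

/-- The Lyndon rearrangement of `w`: its lexicographically smallest rotation. -/
noncomputable def lyndonOf (w : Word n) : Word n :=
  letI := Classical.dec (∃ i : Fin n, IsLyndon (rot i w))
  if h : ∃ i : Fin n, IsLyndon (rot i w) then rot h.choose w else w

/-- Change the letter at the rightmost unmatched position of `w` to `0`. -/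
noncomputable def flipTop (w : Word n) : Word n :=
  if h : (unmatchedPos w).Nonempty then
    Function.update w ((unmatchedPos w).max' h) false
  else w

/-- The map `φ`: take the Lyndon rearrangement of a representative and change the letter
at its rightmost unmatched position (which carries a `1` on the upper half of ranks)
to `0`. -/
noncomputable def phi (u : Necklace n) : Necklace n :=
  nec (flipTop (lyndonOf (Quotient.out u)))

/-- `x` lies strictly inside the cyclic arc running from `i` (exclusive) to `k`
(exclusive), in the cyclic order of positions. -/
def StrictBtw (i x k : Fin n) : Prop :=
  0 < (x - i).val ∧ (x - i).val < (k - i).val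

/-- The pairs `{i, k}` and `{j, l}` cross: exactly one of `j, l` lies strictly inside one
of the two cyclic arcs determined by `i` and `k`. -/
def Crosses (i k j l : Fin n) : Prop := Xor' (StrictBtw i j k) (StrictBtw i l k)

/-- `wT w t` is the word obtained from `w` by changing the letters at the last `t`
unmatched positions of `w` to `0`; that is, if the unmatched positions of `w` are
`p₁ < … < p_m`, the positions `p_{m-t+1}, …, p_m` are changed to `0`. -/
noncomputable def wT (w : Word n) (t : ℕ) : Word n := fun j =>
  if j ∈ unmatchedPos w ∧ ((unmatchedPos w).filter fun k => j ≤ k).card ≤ t then false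
  else w j

/-- The order on necklaces (the poset `Bₙ/Cₙ`): `u ≤ v` iff there are representatives
`w` of `u` and `w'` of `v` such that every position carrying `1` in `w` also carries `1`
in `w'`. -/
def nle (u v : Necklace n) : Prop :=
  ∃ w w' : Word n, nec w = u ∧ nec w' = v ∧ ∀ i, w i = true → w' i = true

/-- The strict order on necklaces. -/
def nlt (u v : Necklace n) : Prop := nle u v ∧ u ≠ v

/-- `v` covers `u` in `Bₙ/Cₙ`: `u < v` and there is no `z` with `u < z < v`. -/
def ncovBy (u v : Necklace n) : Prop := nlt u v ∧ ∀ z, nlt u z → ¬ nlt z v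

/-- A chain top: a necklace `v` in the upper half of ranks (`2·rank v ≥ n`) which is not
the image under `φ` of any necklace in the strict upper half of ranks. -/
def IsChainTop (v : Necklace n) : Prop :=
  n ≤ 2 * rank v ∧ ∀ u : Necklace n, n < 2 * rank u → phi u ≠ v

/-- The `φ`-string below the chain top `v`: the necklaces of the words `w_t`,
`0 ≤ t ≤ m`, where `w` is the Lyndon representative of `v` and `m = 2·rank v − n`. -/
noncomputable def chainOf (v : Necklace n) : Set (Necklace n) :=
  { u | ∃ t ≤ 2 * rank v - n, u = nec (wT (lyndonOf (Quotient.out v)) t) }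


section AuxMatching

set_option linter.unusedSectionVars false

variable {n : ℕ} [NeZero n]

lemma finSubVal (a b : Fin n) :
    (a - b).val = if b.val ≤ a.val then a.val - b.val else a.val + n - b.val := by
  have ha := a.isLt; have hb := b.isLt
  rw [Fin.sub_def]
  rcases le_or_gt b.val a.val with h | h
  · have he : n - b.val + a.val = n + (a.val - b.val) := by omega
    simp only [he, Nat.add_mod_left, if_pos h, Nat.mod_eq_of_lt (by omega : a.val - b.val < n)]
  · simp only [if_neg (by omega : ¬ b.val ≤ a.val),
      Nat.mod_eq_of_lt (by omega : n - b.val + a.val < n)]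
    omega

lemma finValNe {a b : Fin n} (h : a ≠ b) : a.val ≠ b.val := fun e => h (Fin.ext e)

lemma finSubInj {a b c : Fin n} (h : (a - c).val = (b - c).val) : a = b := by
  have h2 : a - c = b - c := Fin.ext h
  exact sub_left_injective h2

lemma finBetween {i j a : Fin n} (hji : j ≠ i) (h : (j - i).val < (a - i).val) :
    (a - j).val < (a - i).val := by
  have h1 := finValNe hji
  have ha := a.isLt; have hb := i.isLt; have hc := j.isLt
  simp only [finSubVal] at *
  split_ifs at * <;> omega

lemma finCross {i i' j : Fin n} (h1 : i ≠ i') (h2 : j ≠ i) (h3 : j ≠ i')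
    (ha : (j - i).val ≤ (i' - i).val) (hb : (j - i').val ≤ (i - i').val) : False := by
  have e1 := finValNe h1; have e2 := finValNe h2; have e3 := finValNe h3
  have := i.isLt; have := i'.isLt; have := j.isLt
  simp only [finSubVal] at *
  split_ifs at * <;> omega

lemma firstAfter_unique {S : Finset (Fin n)} {i j j' : Fin n}
    (h : FirstAfter S i j) (h' : FirstAfter S i j') : j = j' :=
  finSubInj (le_antisymm (h.2.2 j' h'.1 h'.2.1) (h'.2.2 j h.1 h.2.1))

lemma firstAfter_exists {S : Finset (Fin n)} {i k : Fin n} (hk : k ∉ S) (hki : k ≠ i) :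
    ∃ j, FirstAfter S i j := by
  obtain ⟨j, hj, hmin⟩ := Finset.exists_min_image
    (Finset.univ.filter fun x => x ∉ S ∧ x ≠ i) (fun x => (x - i).val)
    ⟨k, by simp [hk, hki]⟩
  simp only [Finset.mem_filter, Finset.mem_univ, true_and] at hj
  exact ⟨j, hj.1, hj.2, fun x hx hxi => hmin x (by simp [hx, hxi])⟩

lemma mem_matchedPos {M : Finset (Fin n × Fin n)} {x : Fin n} :
    x ∈ matchedPos M ↔ ∃ p ∈ M, p.1 = x ∨ p.2 = x := by
  simp only [matchedPos, Finset.mem_union, Finset.mem_image]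
  constructor
  · rintro (⟨p, hp, rfl⟩ | ⟨p, hp, rfl⟩) <;> exact ⟨p, hp, by simp⟩
  · rintro ⟨p, hp, rfl | rfl⟩
    · exact Or.inl ⟨p, hp, rfl⟩
    · exact Or.inr ⟨p, hp, rfl⟩

lemma matchedPos_insert {M : Finset (Fin n × Fin n)} {i j : Fin n} :
    matchedPos (insert (i, j) M) = insert i (insert j (matchedPos M)) := by
  ext x
  simp only [mem_matchedPos, Finset.mem_insert]
  constructor
  · rintro ⟨p, hp | hp, h⟩
    · subst hp; simpa using h.imp (·.symm) (fun h => Or.inl h.symm)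
    · exact Or.inr (Or.inr ⟨p, hp, h⟩)
  · rintro (rfl | rfl | ⟨p, hp, h⟩)
    · exact ⟨(x, j), Or.inl rfl, Or.inl rfl⟩
    · exact ⟨(i, x), Or.inl rfl, Or.inr rfl⟩
    · exact ⟨p, Or.inr hp, h⟩

lemma notMem_of_step {w : Word n} {M M' : Finset (Fin n × Fin n)}
    (h : MatchStep w M M') : ∃ i j, i ∉ matchedPos M ∧ j ∉ matchedPos M ∧
      M' = insert (i, j) M := by
  cases h with
  | @step i j hi hw hj hj1 => exact ⟨i, j, hi, hj.1, rfl⟩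

lemma step_inv {w : Word n} {M M' : Finset (Fin n × Fin n)}
    (h : MatchStep w M M') : ∃ i j, i ∉ matchedPos M ∧ w i = false ∧
      FirstAfter (matchedPos M) i j ∧ w j = true ∧ M' = insert (i, j) M := by
  cases h with
  | @step i j hi hw hj hj1 => exact ⟨i, j, hi, hw, hj, hj1, rfl⟩

lemma step_card {w : Word n} {M M' : Finset (Fin n × Fin n)}
    (h : MatchStep w M M') : M'.card = M.card + 1 := by
  obtain ⟨i, j, hi, hj, rfl⟩ := notMem_of_step h
  rw [Finset.card_insert_of_notMem]
  intro hm
  exact hi (mem_matchedPos.mpr ⟨(i, j), hm, Or.inl rfl⟩)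

lemma diamond {w : Word n} {M M₁ M₂ : Finset (Fin n × Fin n)}
    (h1 : MatchStep w M M₁) (h2 : MatchStep w M M₂) :
    M₁ = M₂ ∨ ∃ M₃, MatchStep w M₁ M₃ ∧ MatchStep w M₂ M₃ := by
  cases h1 with
  | @step i j hi hwi hj hj1 =>
  cases h2 with
  | @step i' j' hi' hwi' hj' hj1' =>
  by_cases hii : i = i'
  · subst hii
    left; rw [firstAfter_unique hj hj']
  · have hji : j ≠ i := hj.2.1
    have hji' : j' ≠ i' := hj'.2.1
    have hjii' : j ≠ i' := fun h => by simp [h, hwi'] at hj1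
    have hj'i : j' ≠ i := fun h => by simp [h, hwi] at hj1'
    have hjj' : j ≠ j' := by
      rintro rfl
      exact finCross hii hji hjii' (hj.2.2 i' hi' (Ne.symm hii)) (hj'.2.2 i hi hii)
    have hiS : i ∉ matchedPos M := hi
    have hjS : j ∉ matchedPos M := hj.1
    have hi'S : i' ∉ matchedPos M := hi'
    have hj'S : j' ∉ matchedPos M := hj'.1
    right
    refine ⟨insert (i', j') (insert (i, j) M), ?_, ?_⟩
    · refine MatchStep.step (i := i') (j := j') ?_ hwi' ?_ hj1'
      · rw [matchedPos_insert]
        simp [Ne.symm hii, Ne.symm hjii', hi'S]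
      · refine ⟨?_, hji', fun k hk hki => hj'.2.2 k ?_ hki⟩
        · rw [matchedPos_insert]; simp [hj'i, hjj'.symm, hj'S]
        · intro hkM
          exact hk (by rw [matchedPos_insert]; simp [hkM])
    · rw [Finset.insert_comm]
      refine MatchStep.step (i := i) (j := j) ?_ hwi ?_ hj1
      · rw [matchedPos_insert]
        simp [hii, hj'i.symm, hiS]
      · refine ⟨?_, hji, fun k hk hki => hj.2.2 k ?_ hki⟩
        · rw [matchedPos_insert]; simp [hjii', hjj', hjS]
        · intro hkM
          exact hk (by rw [matchedPos_insert]; simp [hkM])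

lemma stuck_eq {w : Word n} {M N : Finset (Fin n × Fin n)}
    (hM : ∀ M', ¬ MatchStep w M M') (h : Relation.ReflTransGen (MatchStep w) M N) :
    M = N := by
  rcases h.cases_head with rfl | ⟨c, hc, -⟩
  · rfl
  · exact absurd hc (hM c)

lemma max_unique {w : Word n} {M₁ M₂ : Finset (Fin n × Fin n)}
    (h1 : IsMaximalMatching w M₁) (h2 : IsMaximalMatching w M₂) : M₁ = M₂ := by
  obtain ⟨d, hd1, hd2⟩ := Relation.church_rosser
    (fun a b c hab hac => by
      rcases diamond hab hac with rfl | ⟨d, hd, hd'⟩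
      · exact ⟨b, Relation.ReflGen.refl, Relation.ReflTransGen.refl⟩
      · exact ⟨d, Relation.ReflGen.single hd, Relation.ReflTransGen.single hd'⟩)
    h1.1 h2.1
  rw [stuck_eq h1.2 hd1, stuck_eq h2.2 hd2]

lemma exists_max (w : Word n) : ∃ M, IsMaximalMatching w M := by
  classical
  obtain ⟨M, hM, hmax⟩ := Finset.exists_max_image
    (Finset.univ.filter fun M => Relation.ReflTransGen (MatchStep w) ∅ M)
    Finset.card ⟨∅, by simp [Relation.ReflTransGen.refl]⟩
  simp only [Finset.mem_filter, Finset.mem_univ, true_and] at hM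
  refine ⟨M, hM, fun M' hstep => ?_⟩
  have hM' : Relation.ReflTransGen (MatchStep w) ∅ M' := hM.tail hstep
  have := hmax M' (by simpa using hM')
  have := step_card hstep
  omega

lemma matching_spec (w : Word n) : IsMaximalMatching w (matching w) := by
  rw [matching]
  rw [dif_pos (exists_max w)]
  exact (exists_max w).choose_spec

lemma matching_eq {w : Word n} {M : Finset (Fin n × Fin n)}
    (h : IsMaximalMatching w M) : matching w = M :=
  max_unique (matching_spec w) h

lemma mem_unmatched {w : Word n} {i : Fin n} :
    i ∈ unmatchedPos w ↔ i ∉ matchedPos (matching w) := by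
  simp [unmatchedPos]

def GoodM (w : Word n) (M : Finset (Fin n × Fin n)) : Prop :=
  (∀ p ∈ M, w p.1 = false ∧ w p.2 = true) ∧
  (∀ p ∈ M, ∀ q ∈ M, (p.1 = q.1 ∨ p.1 = q.2 ∨ p.2 = q.1 ∨ p.2 = q.2) → p = q)

lemma run_good {w : Word n} {M : Finset (Fin n × Fin n)}
    (h : Relation.ReflTransGen (MatchStep w) ∅ M) : GoodM w M := by
  induction h with
  | refl => exact ⟨by simp, by simp⟩
  | tail hMb hstep ih =>
    cases hstep with
    | @step i j hi hwi hj hj1 =>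
      obtain ⟨ihp, ihq⟩ := ih
      have hjS := hj.1
      constructor
      · intro p hp
        rcases Finset.mem_insert.mp hp with rfl | hp
        · exact ⟨hwi, hj1⟩
        · exact ihp p hp
      · intro p hp q hq hor
        rcases Finset.mem_insert.mp hp with rfl | hp <;>
          rcases Finset.mem_insert.mp hq with rfl | hq
        · rfl
        · exfalso
          have h1 : q.1 ∈ matchedPos _ := mem_matchedPos.mpr ⟨q, hq, Or.inl rfl⟩
          have h2 : q.2 ∈ matchedPos _ := mem_matchedPos.mpr ⟨q, hq, Or.inr rfl⟩
          rcases hor with e | e | e | e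
          · exact hi ((show i = q.1 from e) ▸ h1)
          · exact hi ((show i = q.2 from e) ▸ h2)
          · exact hjS ((show j = q.1 from e) ▸ h1)
          · exact hjS ((show j = q.2 from e) ▸ h2)
        · exfalso
          have h1 : p.1 ∈ matchedPos _ := mem_matchedPos.mpr ⟨p, hp, Or.inl rfl⟩
          have h2 : p.2 ∈ matchedPos _ := mem_matchedPos.mpr ⟨p, hp, Or.inr rfl⟩
          rcases hor with e | e | e | e
          · exact hi ((show p.1 = i from e) ▸ h1)
          · exact hjS ((show p.1 = j from e) ▸ h1)
          · exact hi ((show p.2 = i from e) ▸ h2)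
          · exact hjS ((show p.2 = j from e) ▸ h2)
        · exact ihq p hp q hq hor

lemma run_transfer {w w' : Word n} {M : Finset (Fin n × Fin n)}
    (h : Relation.ReflTransGen (MatchStep w) ∅ M)
    (hag : ∀ i ∈ matchedPos M, w i = w' i) :
    Relation.ReflTransGen (MatchStep w') ∅ M := by
  induction h with
  | refl => exact Relation.ReflTransGen.refl
  | @tail b c hMb hstep ih =>
    cases hstep with
    | @step i j hi hwi hj hj1 =>
      have hiMem : i ∈ matchedPos (insert (i, j) b) := by
        rw [matchedPos_insert]; simp
      have hjMem : j ∈ matchedPos (insert (i, j) b) := by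
        rw [matchedPos_insert]; simp
      have hag1 : ∀ x ∈ matchedPos b, w x = w' x := fun x hx =>
        hag x (by rw [matchedPos_insert]; simp [hx])
      refine Relation.ReflTransGen.tail (ih hag1) ?_
      exact MatchStep.step hi ((hag i hiMem) ▸ hwi) hj ((hag j hjMem) ▸ hj1)

lemma unmatched_all_true (w : Word n) (hmaj : zeros w < wt w) :
    ∀ i ∈ unmatchedPos w, w i = true := by
  by_contra hcon
  push_neg at hcon
  obtain ⟨i0, hi0u, hi0f'⟩ := hcon
  have hi0f : w i0 = false := by simpa using hi0f'
  have hmaxM := matching_spec w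
  by_cases hex : ∃ a ∈ unmatchedPos w, w a = true
  · obtain ⟨a, hau, hat⟩ := hex
    obtain ⟨i₀, hi₀, hmin⟩ := Finset.exists_min_image
      ((unmatchedPos w).filter fun k => w k = false) (fun k => (a - k).val)
      ⟨i0, Finset.mem_filter.mpr ⟨hi0u, hi0f⟩⟩
    rw [Finset.mem_filter] at hi₀
    have hi₀S : i₀ ∉ matchedPos (matching w) := mem_unmatched.mp hi₀.1
    have hai₀ : a ≠ i₀ := by
      rintro rfl; rw [hat] at hi₀; exact absurd hi₀.2 (by simp)
    have haS : a ∉ matchedPos (matching w) := mem_unmatched.mp hau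
    obtain ⟨j, hjF⟩ := firstAfter_exists haS hai₀
    cases hwj : w j with
    | true => exact hmaxM.2 _ (MatchStep.step hi₀S hi₀.2 hjF hwj)
    | false =>
      have hjne_a : j ≠ a := by rintro rfl; rw [hwj] at hat; cases hat
      have hju : j ∈ unmatchedPos w := mem_unmatched.mpr hjF.1
      have hle : (j - i₀).val ≤ (a - i₀).val := hjF.2.2 a haS hai₀
      have hlt : (j - i₀).val < (a - i₀).val :=
        lt_of_le_of_ne hle fun e => hjne_a (finSubInj e)
      have hb := finBetween hjF.2.1 hlt
      have hm := hmin j (Finset.mem_filter.mpr ⟨hju, hwj⟩)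
      omega
  · push_neg at hex
    have good := run_good hmaxM.1
    have htrue_sub : Finset.univ.filter (fun i => w i = true) ⊆
        (matching w).image Prod.snd := by
      intro x hx
      rw [Finset.mem_filter] at hx
      have hxm : x ∈ matchedPos (matching w) := by
        by_contra hxm
        exact hex x (mem_unmatched.mpr hxm) hx.2
      obtain ⟨p, hp, he⟩ := mem_matchedPos.mp hxm
      rcases he with he | he
      · exfalso
        have := (good.1 p hp).1
        rw [he, hx.2] at this; cases this
      · exact Finset.mem_image.mpr ⟨p, hp, he⟩
    have h1 : wt w ≤ (matching w).card := by
      rw [wt]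
      exact le_trans (Finset.card_le_card htrue_sub) Finset.card_image_le
    have hfalse_sup : (matching w).image Prod.fst ⊆
        Finset.univ.filter (fun i => w i = false) := by
      intro x hx
      obtain ⟨p, hp, rfl⟩ := Finset.mem_image.mp hx
      simp [(good.1 p hp).1]
    have hinj : ((matching w).image Prod.fst).card = (matching w).card :=
      Finset.card_image_of_injOn fun p hp q hq e => good.2 p hp q hq (Or.inl e)
    have h2 : (matching w).card ≤ zeros w := by
      rw [zeros, ← hinj]
      exact Finset.card_le_card hfalse_sup
    omega

end AuxMatching

/-- Let `w` be a Lyndon word with strictly more `1`s than `0`s and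
unmatched positions `p₁ < … < p_m` (`m ≥ 1`), and let `w'` be obtained from `w` by
changing the letter at `p_m` from `1` to `0`.  If `m ≥ 2`, the matched pairs of `w'` are
exactly those of `w` together with the single new pair `{p₁, p_m}` (whose `0` is at
`p_m` and whose `1` is at `p₁`), and the unmatched positions of `w'` are
`p₂, …, p_{m−1}`.  If `m = 1`, the matched pairs of `w'` equal those of `w`, and `p₁` is
the unique unmatched position of `w'`, now carrying a `0`. -/
theorem flip_rightmost_unmatched (n : ℕ) [NeZero n] (w : Word n)
    (hL : IsLyndon w) (hmaj : zeros w < wt w)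
    (hne : (unmatchedPos w).Nonempty)
    (w' : Word n)
    (hw' : w' = Function.update w ((unmatchedPos w).max' hne) false) :
    (2 ≤ (unmatchedPos w).card →
      matching w' =
        insert ((unmatchedPos w).max' hne, (unmatchedPos w).min' hne) (matching w) ∧
      unmatchedPos w' =
        unmatchedPos w \ {(unmatchedPos w).min' hne, (unmatchedPos w).max' hne}) ∧
    ((unmatchedPos w).card = 1 →
      matching w' = matching w ∧
      unmatchedPos w' = {(unmatchedPos w).max' hne} ∧
      w' ((unmatchedPos w).max' hne) = false) := by
  classical
  set M := matching w with hM
  have hmaxM := matching_spec w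
  set pm := (unmatchedPos w).max' hne with hpm
  set p1 := (unmatchedPos w).min' hne with hp1
  have htrue := unmatched_all_true w hmaj
  have hpmu : pm ∈ unmatchedPos w := Finset.max'_mem _ hne
  have hp1u : p1 ∈ unmatchedPos w := Finset.min'_mem _ hne
  have hpmS : pm ∉ matchedPos M := mem_unmatched.mp hpmu
  have hp1S : p1 ∉ matchedPos M := mem_unmatched.mp hp1u
  have hw'pm : w' pm = false := by rw [hw']; simp
  have hw'other : ∀ x : Fin n, x ≠ pm → w' x = w x := by
    intro x hx; rw [hw']; exact Function.update_of_ne hx _ _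
  have hag : ∀ i ∈ matchedPos M, w i = w' i := by
    intro i hi
    exact (hw'other i (fun e => hpmS (e ▸ hi))).symm
  have run' : Relation.ReflTransGen (MatchStep w') ∅ M := run_transfer hmaxM.1 hag
  constructor
  · intro hcard
    have hp1pm : p1 ≠ pm := by
      have := Finset.min'_lt_max'_of_card _ (by omega : 1 < (unmatchedPos w).card)
      exact ne_of_lt this
    have hFA : FirstAfter (matchedPos M) pm p1 := by
      refine ⟨hp1S, hp1pm, fun k hk hkpm => ?_⟩
      have hku : k ∈ unmatchedPos w := mem_unmatched.mpr hk
      have h1 : p1.val ≤ k.val := Finset.min'_le _ _ hku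
      have h2 : k.val ≤ pm.val := Finset.le_max' _ _ hku
      have h3 : k.val ≠ pm.val := finValNe hkpm
      have h4 : p1.val ≠ pm.val := finValNe hp1pm
      simp only [finSubVal]
      split_ifs <;> omega
    have hw'p1 : w' p1 = true := by
      rw [hw'other p1 hp1pm]; exact htrue p1 hp1u
    have hstep : MatchStep w' M (insert (pm, p1) M) :=
      MatchStep.step hpmS hw'pm hFA hw'p1
    have hmax' : IsMaximalMatching w' (insert (pm, p1) M) := by
      refine ⟨run'.tail hstep, fun M'' hst => ?_⟩
      obtain ⟨i', j', hi', hwi', hj', hj1', rfl⟩ := step_inv hst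
      rw [matchedPos_insert] at hi'
      simp only [Finset.mem_insert, not_or] at hi'
      have hiu : i' ∈ unmatchedPos w := mem_unmatched.mpr hi'.2.2
      have : w' i' = true := by
        rw [hw'other i' hi'.1]; exact htrue i' hiu
      rw [this] at hwi'; cases hwi'
    refine ⟨matching_eq hmax', ?_⟩
    rw [unmatchedPos, matching_eq hmax', matchedPos_insert]
    ext x
    simp only [Finset.mem_sdiff, Finset.mem_univ, true_and, Finset.mem_insert,
      not_or, unmatchedPos, Finset.mem_singleton]
    tauto
  · intro hcard
    obtain ⟨a, ha⟩ := Finset.card_eq_one.mp hcard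
    have hapm : a = pm := by
      have := hpmu; rw [ha, Finset.mem_singleton] at this; exact this.symm
    subst hapm
    have hmax' : IsMaximalMatching w' M := by
      refine ⟨run', fun M'' hst => ?_⟩
      obtain ⟨i, j, hi, hwi, hj, hj1, rfl⟩ := step_inv hst
      have hiu : i ∈ unmatchedPos w := mem_unmatched.mpr hi
      have hju : j ∈ unmatchedPos w := mem_unmatched.mpr hj.1
      rw [ha, Finset.mem_singleton] at hiu hju
      exact hj.2.1 (hju.trans hiu.symm)
    refine ⟨matching_eq hmax', ?_, hw'pm⟩
    rw [unmatchedPos, matching_eq hmax']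
    rw [unmatchedPos] at ha
    rw [ha]
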